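/- Let H be a Hilbert space and φ an endomorphism of H. Then φ is a bounded finite potent endomorphism if and only if φ = ψ + φ' where ψ is a bounded finite rank operator, φ' is a bounded nilpotent operator, and ψ∘φ' = φ'∘ψ = 0. -/

import Mathlib

private lemma add_pow_succ_of_mul_eq_zero {R : Type*} [Ring R] (a b : R)
    (hab : a * b = 0) (hba : b * a = 0) : ∀ n : ℕ, (a + b) ^ (n + 1) = a ^ (n + 1) + b ^ (n + 1)
  | 0 => by simp
  | n + 1 => by
    have h1 : a ^ (n + 1) * b = 0 := by rw [pow_succ, mul_assoc, hab, mul_zero]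
    have h2 : b ^ (n + 1) * a = 0 := by rw [pow_succ, mul_assoc, hba, mul_zero]
    calc (a + b) ^ (n + 1 + 1) = (a + b) ^ (n + 1) * (a + b) := by rw [pow_succ]
    _ = (a ^ (n + 1) + b ^ (n + 1)) * (a + b) := by
        rw [add_pow_succ_of_mul_eq_zero a b hab hba n]
    _ = a ^ (n + 1) * a + a ^ (n + 1) * b + (b ^ (n + 1) * a + b ^ (n + 1) * b) := by
        rw [add_mul, mul_add, mul_add]
    _ = a ^ (n + 1 + 1) + b ^ (n + 1 + 1) := by
        rw [h1, h2, ← pow_succ, ← pow_succ]; abel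

private lemma continuous_pow_lm {H : Type*} [NormedAddCommGroup H] [NormedSpace ℂ H]
    (φ : H →ₗ[ℂ] H) (hφ : Continuous ⇑φ) (n : ℕ) : Continuous ⇑(φ ^ n) := by
  induction n with
  | zero => simpa [Module.End.one_eq_id] using continuous_id
  | succ n ih =>
    have : ⇑(φ ^ (n + 1)) = ⇑(φ ^ n) ∘ ⇑φ := by
      rw [pow_succ]; rfl
    rw [this]; exact ih.comp hφ

private lemma range_pow_add_le {H : Type*} [NormedAddCommGroup H] [NormedSpace ℂ H]
    (φ : H →ₗ[ℂ] H) (a b : ℕ) :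
    LinearMap.range (φ ^ (a + b)) ≤ LinearMap.range (φ ^ a) := by
  rw [pow_add]
  rintro x ⟨y, rfl⟩
  exact ⟨(φ ^ b) y, rfl⟩

theorem bounded_finite_potent_sum_characterization {H : Type*} [NormedAddCommGroup H]
    [InnerProductSpace ℂ H] [CompleteSpace H] (φ : H →ₗ[ℂ] H) :
    (Continuous ⇑φ ∧ ∃ n : ℕ, FiniteDimensional ℂ (LinearMap.range (φ ^ n))) ↔
    ∃ ψ φ' : H →ₗ[ℂ] H, φ = ψ + φ' ∧
      Continuous ⇑ψ ∧ FiniteDimensional ℂ (LinearMap.range ψ) ∧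
      Continuous ⇑φ' ∧ IsNilpotent φ' ∧
      ψ ∘ₗ φ' = 0 ∧ φ' ∘ₗ ψ = 0 := by
  constructor
  · rintro ⟨hφc, n, hfd⟩
    have hfd' : ∀ k : ℕ, FiniteDimensional ℂ (LinearMap.range (φ ^ (n + k))) := fun k =>
      Submodule.finiteDimensional_of_le (range_pow_add_le φ n k)
    classical
    let f : ℕ → ℕ := fun k => Module.finrank ℂ (LinearMap.range (φ ^ (n + k)))
    obtain ⟨k₀, hk₀⟩ : ∃ k₀, f k₀ = sInf (Set.range f) :=
      Nat.sInf_mem (Set.range_nonempty f)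
    set m := n + k₀ with hm
    have hfdm : FiniteDimensional ℂ (LinearMap.range (φ ^ m)) := hfd' k₀
    have hstep : ∀ j : ℕ, LinearMap.range (φ ^ (m + j + 1)) =
        Submodule.map φ (LinearMap.range (φ ^ (m + j))) := by
      intro j
      rw [pow_succ', Module.End.mul_eq_comp, LinearMap.range_comp]
    have hstab1 : LinearMap.range (φ ^ (m + 1)) = LinearMap.range (φ ^ m) := by
      refine Submodule.eq_of_le_of_finrank_le (range_pow_add_le φ m 1) ?_
      have hmem : f (k₀ + 1) ∈ Set.range f := ⟨k₀ + 1, rfl⟩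
      have h2 := Nat.sInf_le hmem
      rw [← hk₀] at h2
      simp only [f] at h2
      rw [hm, Nat.add_assoc]
      exact h2
    have hstab : ∀ j : ℕ, LinearMap.range (φ ^ (m + j)) = LinearMap.range (φ ^ m) := by
      intro j
      induction j with
      | zero => rfl
      | succ j ih =>
        rw [← Nat.add_assoc, hstep j, ih, ← LinearMap.range_comp, ← Module.End.mul_eq_comp,
          ← pow_succ']
        exact hstab1
    set U := LinearMap.range (φ ^ m) with hU
    set K := LinearMap.ker (φ ^ m) with hK
    have hmapU : Submodule.map (φ ^ m) U = U := by
      rw [hU, ← LinearMap.range_comp, ← Module.End.mul_eq_comp, ← pow_add]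
      exact hstab m
    have hmapφ : Submodule.map φ U = U := by
      have h := hstep 0
      simp only [Nat.add_zero] at h
      rw [← h]
      exact hstab1
    have hUmem : ∀ x ∈ U, (φ ^ m) x ∈ U := by
      intro x hx
      rw [← hmapU]
      exact Submodule.mem_map_of_mem hx
    set g : U →ₗ[ℂ] U := (φ ^ m).restrict hUmem with hg
    have hgsurj : Function.Surjective g := by
      rintro ⟨y, hy⟩
      rw [← hmapU] at hy
      obtain ⟨x, hx, hxy⟩ := hy
      exact ⟨⟨x, hx⟩, Subtype.ext hxy⟩
    have hginj : Function.Injective g :=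
      (LinearMap.injective_iff_surjective (f := g)).2 hgsurj
    have hdisj : Disjoint U K := by
      rw [Submodule.disjoint_def]
      intro x hxU hxK
      have h0 : g ⟨x, hxU⟩ = 0 := by
        apply Subtype.ext
        simpa [hg, LinearMap.restrict_apply, hK] using hxK
      have := hginj (a₁ := ⟨x, hxU⟩) (a₂ := 0) (by simpa using h0)
      simpa using congrArg Subtype.val this
    have hcodisj : U ⊔ K = ⊤ := by
      rw [eq_top_iff]
      intro x _
      have hx : (φ ^ m) x ∈ U := ⟨x, rfl⟩
      obtain ⟨⟨u, hu⟩, hgu⟩ := hgsurj ⟨(φ ^ m) x, hx⟩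
      have huv : (φ ^ m) u = (φ ^ m) x := by
        simpa [hg, LinearMap.restrict_apply] using congrArg Subtype.val hgu
      refine Submodule.mem_sup.2 ⟨u, hu, x - u, ?_, by abel⟩
      rw [hK, LinearMap.mem_ker, map_sub, huv, sub_self]
    have hcompl : IsCompl U K := ⟨hdisj, codisjoint_iff.2 hcodisj⟩
    have hfdU : FiniteDimensional ℂ U := hfdm
    have hUclosed : IsClosed (U : Set H) := Submodule.closed_of_finiteDimensional U
    have hKclosed : IsClosed (K : Set H) := by
      have h1 : Continuous ⇑(φ ^ m) := continuous_pow_lm φ hφc m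
      have hset : (K : Set H) = ⇑(φ ^ m) ⁻¹' {0} := by
        ext x; simp [hK, LinearMap.mem_ker]
      rw [hset]
      exact isClosed_singleton.preimage h1
    set P : H →L[ℂ] U := U.linearProjOfClosedCompl K hcompl hUclosed hKclosed with hP
    set e : H →ₗ[ℂ] H := U.subtype ∘ₗ U.projectionOnto K hcompl with he
    have hecont : Continuous ⇑e := by
      have hcoe : ⇑e = Subtype.val ∘ ⇑P := by
        ext x
        simp [he, hP, Submodule.coe_continuous_linearProjOfClosedCompl']
      rw [hcoe]
      exact continuous_subtype_val.comp P.continuous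
    have he_mem : ∀ x, e x ∈ U := fun x => (U.projectionOnto K hcompl x).2
    have he_U : ∀ x ∈ U, e x = x := by
      intro x hx
      have := Submodule.linearProjOfIsCompl_apply_left hcompl ⟨x, hx⟩
      simp [he, this]
    have he_K : ∀ x ∈ K, e x = 0 := by
      intro x hx
      have := Submodule.linearProjOfIsCompl_apply_right hcompl ⟨x, hx⟩
      simp [he, this]
    have hsub_mem : ∀ x, x - e x ∈ K := by
      intro x
      have h := Submodule.projection_add_projection_eq_self hcompl x
      have h2 : x - e x = ((K.projectionOnto U hcompl.symm) x : H) := by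
        nth_rewrite 1 [← h]; simp [he]
      rw [h2]
      exact ((K.projectionOnto U hcompl.symm) x).2
    have hKinv : ∀ x ∈ K, φ x ∈ K := by
      intro x hx
      rw [hK, LinearMap.mem_ker]
      have : (φ ^ m) (φ x) = φ ((φ ^ m) x) := by
        rw [← Module.End.mul_apply, ← Module.End.mul_apply, ← pow_succ, ← pow_succ']
      rw [this, hK] at *
      rw [LinearMap.mem_ker] at hx
      rw [hx, map_zero]
    have hUinv : ∀ x ∈ U, φ x ∈ U := by
      intro x hx
      rw [← hmapφ]
      exact Submodule.mem_map_of_mem hx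
    set φ' : H →ₗ[ℂ] H := φ - φ ∘ₗ e with hφ'
    have hφ'_apply : ∀ x, φ' x = φ (x - e x) := by
      intro x; simp [hφ', map_sub]
    have hφ'_K : ∀ x, φ' x ∈ K := by
      intro x
      rw [hφ'_apply]
      exact hKinv _ (hsub_mem x)
    have hφ'pow : ∀ j : ℕ, ∀ x, (φ' ^ (j + 1)) x = (φ ^ (j + 1)) (x - e x) := by
      intro j
      induction j with
      | zero => intro x; simp [hφ'_apply, pow_one]
      | succ j ih =>
        intro x
        have h1 : (φ' ^ (j + 1 + 1)) x = (φ' ^ (j + 1)) (φ' x) := by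
          rw [pow_succ, Module.End.mul_apply]
        rw [h1, ih (φ' x)]
        have h2 : e (φ' x) = 0 := he_K _ (hφ'_K x)
        rw [h2, sub_zero, hφ'_apply]
        rw [← Module.End.mul_apply, ← pow_succ]
    have hnil : IsNilpotent φ' := by
      refine ⟨m + 1, ?_⟩
      ext x
      rw [LinearMap.zero_apply, hφ'pow m x]
      have hmem := hsub_mem x
      rw [hK, LinearMap.mem_ker] at hmem
      rw [pow_succ', Module.End.mul_apply, hmem, map_zero]
    refine ⟨φ ∘ₗ e, φ', by rw [hφ']; abel, hφc.comp hecont, ?_, ?_, hnil, ?_, ?_⟩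
    · have hle : LinearMap.range (φ ∘ₗ e) ≤ U := by
        rintro x ⟨y, rfl⟩
        exact hUinv _ (he_mem y)
      exact Submodule.finiteDimensional_of_le hle
    · have : ⇑φ' = ⇑φ - ⇑(φ ∘ₗ e) := by ext x; simp [hφ']
      rw [this]
      exact hφc.sub (hφc.comp hecont)
    · ext x
      have h2 : e (φ' x) = 0 := he_K _ (hφ'_K x)
      simp [h2]
    · ext x
      have h1 : φ (e x) ∈ U := hUinv _ (he_mem x)
      have h2 : e (φ (e x)) = φ (e x) := he_U _ h1
      simp [hφ'_apply, h2]
  · rintro ⟨ψ, φ', rfl, hψc, hψfd, hφ'c, ⟨k, hk⟩, hcomp1, hcomp2⟩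
    have hmul1 : ψ * φ' = 0 := hcomp1
    have hmul2 : φ' * ψ = 0 := hcomp2
    constructor
    · have : ⇑(ψ + φ') = ⇑ψ + ⇑φ' := by ext x; simp
      rw [this]; exact hψc.add hφ'c
    · refine ⟨k + 1, ?_⟩
      have hpow := add_pow_succ_of_mul_eq_zero ψ φ' hmul1 hmul2 k
      have hφ'k : φ' ^ (k + 1) = 0 := by rw [pow_succ, hk, zero_mul]
      rw [hpow, hφ'k, add_zero]
      have hle : LinearMap.range (ψ ^ (k + 1)) ≤ LinearMap.range ψ := by
        rintro x ⟨y, rfl⟩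
        rw [pow_succ', Module.End.mul_apply]
        exact ⟨(ψ ^ k) y, rfl⟩
      exact Submodule.finiteDimensional_of_le hle
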